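/- Let π be the distribution on {-1/2, 1/2} × {0,1} with π_Y(0) = π_Y(1) = 1/2 and X = Y - 1/2 almost surely. For ε ∈ (0, 1/2), the predictor g with g(-1/2) = 1/2 - ε and g(1/2) = 1/2 + ε satisfies ECE_π(g) = 1/2 - ε, while the constant predictor g ≡ 1/2 satisfies ECE_π(g) = 0. -/

import Mathlib

open MeasureTheory Filter Set

/-- The expected calibration error of a predictor `g` with respect to a joint
distribution `π` of `(X, Y)`: `ECE_π(g) = E[|E[Y | g(X)] - g(X)|]`, where the conditional
expectation is with respect to the σ-algebra generated by `g(X)`. -/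
noncomputable def ECE {α : Type*} [MeasurableSpace α] (π : Measure (α × ℝ)) (g : α → ℝ) : ℝ :=
  ∫ q, |(π[(fun r : α × ℝ => r.2) |
      MeasurableSpace.comap (fun r : α × ℝ => g r.1) Real.measurableSpace]) q - g q.1| ∂π

/-- The 2-point distribution: `π_Y(0) = π_Y(1) = 1/2` and `X = Y - 1/2` almost surely,
i.e. the uniform mixture of point masses at `(-1/2, 0)` and `(1/2, 1)`. -/
noncomputable def twoPointDist : Measure (ℝ × ℝ) :=
  (1/2 : ENNReal) • Measure.dirac ((-(1/2) : ℝ), (0 : ℝ)) +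
  (1/2 : ENNReal) • Measure.dirac (((1/2) : ℝ), (1 : ℝ))

lemma ae_dirac' {α : Type*} [MeasurableSpace α] [MeasurableSingletonClass α] {a : α}
    {p : α → Prop} (h : p a) : ∀ᵐ x ∂Measure.dirac a, p x := by
  rw [ae_dirac_eq]; exact eventually_pure.2 h

lemma integrable_dirac'' (f : ℝ × ℝ → ℝ) (a : ℝ × ℝ) : Integrable f (Measure.dirac a) :=
  (integrable_const (f a)).congr (ae_dirac' rfl)

lemma integrable_two (f : ℝ × ℝ → ℝ) : Integrable f twoPointDist := by
  rw [twoPointDist]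
  exact (((integrable_dirac'' f _).smul_measure (by norm_num)).add_measure
    ((integrable_dirac'' f _).smul_measure (by norm_num)))

lemma ae_two {p : ℝ × ℝ → Prop} (h1 : p (-(1/2 : ℝ), (0 : ℝ))) (h2 : p ((1/2 : ℝ), (1 : ℝ))) :
    ∀ᵐ r ∂twoPointDist, p r := by
  rw [twoPointDist, ae_add_measure_iff]
  exact ⟨Measure.ae_smul_measure (ae_dirac' h1) _, Measure.ae_smul_measure (ae_dirac' h2) _⟩

lemma integral_two (f : ℝ × ℝ → ℝ) :
    ∫ r, f r ∂twoPointDist = (1/2) * f (-(1/2), 0) + (1/2) * f (1/2, 1) := by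
  rw [twoPointDist, integral_add_measure ((integrable_dirac'' f _).smul_measure (by norm_num))
    ((integrable_dirac'' f _).smul_measure (by norm_num)),
    integral_smul_measure, integral_smul_measure, integral_dirac, integral_dirac]
  norm_num

instance : IsProbabilityMeasure twoPointDist := by
  constructor
  simp [twoPointDist]
  rw [← two_mul, ENNReal.mul_inv_cancel (by norm_num) (by norm_num)]

/-- For the 2-point distribution and `ε ∈ (0, 1/2)`, the predictor with
`g(-1/2) = 1/2 - ε`, `g(1/2) = 1/2 + ε` has `ECE = 1/2 - ε`, while the constant
predictor `1/2` has `ECE = 0`. -/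
theorem stmt1 (ε : ℝ) (hε : ε ∈ Set.Ioo (0 : ℝ) (1/2)) :
    ECE twoPointDist (fun x => if x < 0 then 1/2 - ε else 1/2 + ε) = 1/2 - ε ∧
    ECE twoPointDist (fun _ => (1/2 : ℝ)) = 0 := by
  obtain ⟨hε0, hε2⟩ := hε
  constructor
  · set g : ℝ → ℝ := fun x => if x < 0 then 1/2 - ε else 1/2 + ε with hg
    have hgm : Measurable g := Measurable.ite measurableSet_Iio measurable_const measurable_const
    set m : MeasurableSpace (ℝ × ℝ) :=
      MeasurableSpace.comap (fun r : ℝ × ℝ => g r.1) Real.measurableSpace with hm_def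
    have hm : m ≤ Prod.instMeasurableSpace := (hgm.comp measurable_fst).comap_le
    set h : ℝ × ℝ → ℝ :=
      Set.indicator ((fun r : ℝ × ℝ => g r.1) ⁻¹' Set.Ici (1/2)) (fun _ => (1:ℝ)) with hh
    have hsm : StronglyMeasurable[m] h :=
      stronglyMeasurable_const.indicator ⟨Set.Ici (1/2), measurableSet_Ici, rfl⟩
    have hv1 : g (-(1/2)) = 1/2 - ε := if_pos (by norm_num)
    have hv2 : g ((1/2 : ℝ)) = 1/2 + ε := if_neg (by norm_num)
    have hae : (fun r : ℝ × ℝ => r.2) =ᵐ[twoPointDist] h := by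
      refine ae_two ?_ ?_
      · show (0 : ℝ) = h _
        rw [hh, Set.indicator_of_notMem]
        simp only [Set.mem_preimage, Set.mem_Ici, hv1]
        intro habs; linarith
      · show (1 : ℝ) = h _
        rw [hh, Set.indicator_of_mem]
        simp only [Set.mem_preimage, Set.mem_Ici, hv2]
        linarith
    have hcond : twoPointDist[(fun r : ℝ × ℝ => r.2) | m] =ᵐ[twoPointDist]
        (fun r : ℝ × ℝ => r.2) :=
      condExp_of_aestronglyMeasurable' hm ⟨h, hsm, hae⟩ (integrable_two _)
    have : ECE twoPointDist g = ∫ r, |r.2 - g r.1| ∂twoPointDist := by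
      refine integral_congr_ae ?_
      filter_upwards [hcond] with r hr
      rw [hr]
    rw [ECE] at this ⊢
    rw [this, integral_two]
    simp only
    rw [hv1, hv2]
    rw [show (0:ℝ) - (1/2 - ε) = -(1/2 - ε) by ring, abs_neg,
      abs_of_nonneg (by linarith), show (1:ℝ) - (1/2 + ε) = 1/2 - ε by ring,
      abs_of_nonneg (by linarith)]
    ring
  · rw [ECE]
    simp only [MeasurableSpace.comap_const, condExp_bot]
    have hy : ∫ r : ℝ × ℝ, r.2 ∂twoPointDist = 1/2 := by
      rw [integral_two]; norm_num
    rw [hy]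
    simp
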